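/- Let (L_0,...,L_k,W) be a w-bend in a triangle-free graph G with size at least 2p + 4. Then it contains a u-bend with size at least p. -/

import Mathlib

/-- Data for a w-bend (or u-bend): a levelling `L 0, …, L k`, an enumeration
`p` of the induced path `G[L k]` (with `n + 1` vertices), and an induced path
`U` enumerated by `u` (with `m + 1` vertices, `u 0` the drain `s` and
`u (Fin.last m)` the other end `w`). -/
structure WBendData (V : Type*) where
  k : ℕ
  L : ℕ → Set V
  n : ℕ
  p : Fin (n + 1) → V
  m : ℕ
  u : Fin (m + 1) → V

namespace WBendData

variable {V : Type*}

/-- The drain `s` of the w-bend. -/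
def drain (B : WBendData V) : V := B.u 0

/-- The end `w` of the path `U`. -/
def wend (B : WBendData V) : V := B.u (Fin.last B.m)

/-- The size of the w-bend: the distance in `G` between the two ends of the
path `G[L k]`. -/
noncomputable def size (G : SimpleGraph V) (B : WBendData V) : ℕ :=
  G.dist (B.p 0) (B.p (Fin.last B.n))

end WBendData

/-- `B` is a w-bend in `G`. -/
def IsWBend {V : Type*} (G : SimpleGraph V) (B : WBendData V) : Prop :=
  1 ≤ B.k ∧
  -- `(L 0, …, L k)` is a levelling:
  (∀ i j, i ≤ B.k → j ≤ B.k → i ≠ j → Disjoint (B.L i) (B.L j)) ∧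
  (∃ z : V, B.L 0 = {z}) ∧
  (∀ i, 1 ≤ i → i ≤ B.k → ∀ v ∈ B.L i, ∃ w ∈ B.L (i - 1), G.Adj w v) ∧
  (∀ i j, j ≤ B.k → i + 1 < j → ∀ a ∈ B.L i, ∀ b ∈ B.L j, ¬ G.Adj a b) ∧
  -- `G[L k]` is an induced path, enumerated by `p`:
  Function.Injective B.p ∧
  (∀ i, B.p i ∈ B.L B.k) ∧
  (∀ v ∈ B.L B.k, ∃ i, B.p i = v) ∧
  (∀ i j : Fin (B.n + 1), G.Adj (B.p i) (B.p j) ↔ (i.val + 1 = j.val ∨ j.val + 1 = i.val)) ∧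
  -- `U` is an induced path, disjoint from `L 0 ∪ ⋯ ∪ L k`:
  Function.Injective B.u ∧
  (∀ i j : Fin (B.m + 1), G.Adj (B.u i) (B.u j) ↔ (i.val + 1 = j.val ∨ j.val + 1 = i.val)) ∧
  (∀ i : Fin (B.m + 1), ∀ j, j ≤ B.k → B.u i ∉ B.L j) ∧
  -- some vertex of `L (k-1)` is adjacent to `w` and to a vertex of `L k`:
  (∃ a ∈ B.L (B.k - 1), G.Adj a B.wend ∧ ∃ b ∈ B.L B.k, G.Adj a b) ∧
  -- no edges between `V(U)` and `L k`:
  (∀ i : Fin (B.m + 1), ∀ b ∈ B.L B.k, ¬ G.Adj (B.u i) b) ∧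
  -- no vertex of `L (k-1)` has both a neighbour in `L k` and a neighbour in
  -- `V(U) \ {w}`:
  (∀ a ∈ B.L (B.k - 1), (∃ b ∈ B.L B.k, G.Adj a b) →
    ∀ i : Fin (B.m + 1), i ≠ Fin.last B.m → ¬ G.Adj a (B.u i))

/-- `B` is a u-bend in `G`. -/
def IsUBend {V : Type*} (G : SimpleGraph V) (B : WBendData V) : Prop :=
  IsWBend G B ∧
  -- `w` has a unique neighbour `v` in `L (k-1)`:
  (∃! a : V, a ∈ B.L (B.k - 1) ∧ G.Adj a B.wend) ∧
  -- this `v` has a unique neighbour in `L k`, which is an end of `G[L k]`: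
  (∀ a ∈ B.L (B.k - 1), G.Adj a B.wend →
    (∃! b : V, b ∈ B.L B.k ∧ G.Adj a b) ∧
    (∀ b ∈ B.L B.k, G.Adj a b → b = B.p 0 ∨ b = B.p (Fin.last B.n))) ∧
  -- every vertex of `L (k-1)` has a neighbour in `L k`:
  (∀ a ∈ B.L (B.k - 1), ∃ b ∈ B.L B.k, G.Adj a b)

/-- `B'` is contained in `B`: same drain, levels included in the corresponding
levels, and the path `U'` contained in `L k ∪ V(U)`. -/
def ContainedIn {V : Type*} (B' B : WBendData V) : Prop :=
  B'.k = B.k ∧ B'.drain = B.drain ∧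
  (∀ i, i ≤ B.k → B'.L i ⊆ B.L i) ∧
  (∀ i : Fin (B'.m + 1), B'.u i ∈ B.L B.k ∪ Set.range B.u)

open SimpleGraph

lemma walk_along {V : Type*} {G : SimpleGraph V} {n : ℕ} {f : Fin (n+1) → V}
    (hadj : ∀ i j, G.Adj (f i) (f j) ↔ (i.val+1 = j.val ∨ j.val+1 = i.val)) :
    ∀ (d : ℕ) (i : Fin (n+1)) (h : i.val + d ≤ n),
      ∃ w : G.Walk (f i) (f ⟨i.val + d, by omega⟩), w.length = d := by
  intro d
  induction d with
  | zero =>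
    intro i h
    exact ⟨Walk.nil.copy rfl (congrArg f (Fin.ext (by simp))), by simp⟩
  | succ d ih =>
    intro i h
    obtain ⟨w, hw⟩ := ih i (by omega)
    have hadj' : G.Adj (f ⟨i.val + d, by omega⟩) (f ⟨i.val + (d+1), by omega⟩) := by
      rw [hadj]; left; simp; omega
    exact ⟨w.concat hadj', by simp [hw]⟩

lemma one_sided {V : Type*} (G : SimpleGraph V) (B : WBendData V) (hB : IsWBend G B)
    (P : ℕ) (T : Fin (B.n + 1)) (a : V)
    (haL : a ∈ B.L (B.k - 1)) (haw : G.Adj a B.wend) (haT : G.Adj a (B.p T))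
    (hmax : ∀ x ∈ B.L (B.k - 1), G.Adj x B.wend → ∀ i, G.Adj x (B.p i) → i.val ≤ T.val)
    (hd : P ≤ G.dist (B.p T) (B.p (Fin.last B.n))) :
    ∃ B' : WBendData V, IsUBend G B' ∧ ContainedIn B' B ∧ P ≤ WBendData.size G B' := by
  obtain ⟨hk, hdisj, ⟨z, hz⟩, hlev, hnoedge, hpinj, hpmem, hpsurj, hpadj, huinj, huadj,
    hudisj, -, hUL, hlast⟩ := hB
  have hT : T.val ≤ B.n := Nat.lt_succ_iff.mp T.isLt
  set n' := B.n - T.val with hn'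
  set q : Fin (n' + 1) → V := fun j => B.p ⟨T.val + j.val, by have := j.isLt; omega⟩ with hq
  have hq0 : q 0 = B.p T := by
    apply congrArg B.p
    exact Fin.ext (by simp)
  set Lk1 : Set V :=
    {y | y ∈ B.L (B.k - 1) ∧ (∃ j, G.Adj y (q j)) ∧ (G.Adj y B.wend → y = a)} with hLk1
  set L' : ℕ → Set V := fun i =>
    if i = B.k then Set.range q else if i = B.k - 1 then Lk1 else B.L i with hL'
  have hkne : B.k - 1 ≠ B.k := by omega
  have hL'k : L' B.k = Set.range q := by simp [hL']
  have hL'k1 : L' (B.k - 1) = Lk1 := by simp [hL', hkne]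
  have hL'other : ∀ i, i ≠ B.k → i ≠ B.k - 1 → L' i = B.L i := by
    intro i h1 h2; simp only [hL']; rw [if_neg h1, if_neg h2]
  have hsub : ∀ i, L' i ⊆ B.L i := by
    intro i
    by_cases h1 : i = B.k
    · subst h1; rw [hL'k]
      rintro v ⟨j, rfl⟩; exact hpmem _
    · by_cases h2 : i = B.k - 1
      · subst h2; rw [hL'k1]; exact fun y hy => hy.1
      · rw [hL'other i h1 h2]
  have haLk1 : a ∈ Lk1 := ⟨haL, ⟨0, by rw [hq0]; exact haT⟩, fun _ => rfl⟩
  have haL' : a ∈ L' (B.k - 1) := by rw [hL'k1]; exact haLk1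
  have hqmem : ∀ j, q j ∈ L' B.k := fun j => by rw [hL'k]; exact ⟨j, rfl⟩
  have hjmax : ∀ x ∈ B.L (B.k - 1), G.Adj x B.wend → ∀ j, G.Adj x (q j) → j = 0 := by
    intro x hx hxw j hxj
    have h2 : T.val + j.val ≤ T.val := hmax x hx hxw _ hxj
    exact Fin.ext (by simp only [Fin.val_zero]; omega)
  -- the clauses
  have c3 : ∃ z' : V, L' 0 = {z'} := by
    by_cases h1 : B.k = 1
    · refine ⟨a, ?_⟩
      have h0 : L' 0 = Lk1 := by rw [← hL'k1, h1]
      rw [h0]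
      have hLz : B.L (B.k - 1) = {z} := by rw [h1]; exact hz
      have haz : a = z := by have := haL; rw [hLz] at this; exact this
      apply Set.eq_singleton_iff_unique_mem.mpr
      refine ⟨haLk1, fun y hy => ?_⟩
      have := hy.1; rw [hLz] at this
      rw [Set.mem_singleton_iff] at this; rw [this, ← haz]
    · refine ⟨z, ?_⟩
      rw [hL'other 0 (by omega) (by omega)]
      exact hz
  have c4 : ∀ i, 1 ≤ i → i ≤ B.k → ∀ v ∈ L' i, ∃ y ∈ L' (i - 1), G.Adj y v := by
    intro i h1 h2 v hv
    by_cases hik : i = B.k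
    · subst hik
      rw [hL'k] at hv
      obtain ⟨j, rfl⟩ := hv
      obtain ⟨y, hyL, hyq⟩ := hlev B.k hk le_rfl (q j) (hpmem _)
      by_cases hyw : G.Adj y B.wend ∧ y ≠ a
      · have hj0 : j = 0 := hjmax y hyL hyw.1 j hyq
        subst hj0
        refine ⟨a, haL', by rw [hq0]; exact haT⟩
      · refine ⟨y, ?_, hyq⟩
        rw [hL'k1]
        exact ⟨hyL, ⟨j, hyq⟩, fun hw => by by_contra hne; exact hyw ⟨hw, hne⟩⟩
    · by_cases hik1 : i = B.k - 1
      · subst hik1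
        rw [hL'k1] at hv
        obtain ⟨y, hyL, hyv⟩ := hlev (B.k - 1) h1 (by omega) v hv.1
        refine ⟨y, ?_, hyv⟩
        rw [hL'other (B.k - 1 - 1) (by omega) (by omega)]
        exact hyL
      · rw [hL'other i hik hik1] at hv
        obtain ⟨y, hyL, hyv⟩ := hlev i h1 h2 v hv
        refine ⟨y, ?_, hyv⟩
        rw [hL'other (i - 1) (by omega) (by omega)]
        exact hyL
  have c6 : Function.Injective q := by
    intro j1 j2 h
    have h2 := congrArg Fin.val (hpinj h)
    simp only [] at h2
    exact Fin.ext (by omega)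
  have c8 : ∀ v ∈ L' B.k, ∃ j, q j = v := by
    intro v hv; rw [hL'k] at hv; exact hv
  have c9 : ∀ i j : Fin (n' + 1), G.Adj (q i) (q j) ↔ (i.val + 1 = j.val ∨ j.val + 1 = i.val) := by
    intro i j
    rw [hq]
    simp only []
    rw [hpadj]
    simp only []
    omega
  have c13 : ∃ x ∈ L' (B.k - 1), G.Adj x B.wend ∧ ∃ b ∈ L' B.k, G.Adj x b :=
    ⟨a, haL', haw, ⟨q 0, hqmem 0, by rw [hq0]; exact haT⟩⟩
  have cu1 : ∃! x : V, x ∈ L' (B.k - 1) ∧ G.Adj x B.wend := by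
    refine ⟨a, ⟨haL', haw⟩, ?_⟩
    rintro y ⟨hyL, hyw⟩
    rw [hL'k1] at hyL
    exact hyL.2.2 hyw
  have cu2 : ∀ x ∈ L' (B.k - 1), G.Adj x B.wend →
      (∃! b : V, b ∈ L' B.k ∧ G.Adj x b) ∧
      (∀ b ∈ L' B.k, G.Adj x b → b = q 0 ∨ b = q (Fin.last n')) := by
    intro x hx hxw
    rw [hL'k1] at hx
    obtain ⟨j, hxj⟩ := hx.2.1
    have hj0 : j = 0 := hjmax x hx.1 hxw j hxj
    subst hj0
    constructor
    · refine ⟨q 0, ⟨hqmem 0, hxj⟩, ?_⟩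
      rintro b ⟨hbL, hxb⟩
      rw [hL'k] at hbL
      obtain ⟨j', rfl⟩ := hbL
      rw [hjmax x hx.1 hxw j' hxb]
    · intro b hbL hxb
      rw [hL'k] at hbL
      obtain ⟨j', rfl⟩ := hbL
      left
      rw [hjmax x hx.1 hxw j' hxb]
  have cu3 : ∀ x ∈ L' (B.k - 1), ∃ b ∈ L' B.k, G.Adj x b := by
    intro x hx
    rw [hL'k1] at hx
    obtain ⟨j, hxj⟩ := hx.2.1
    exact ⟨q j, hqmem j, hxj⟩
  have hqlast : q (Fin.last n') = B.p (Fin.last B.n) := by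
    apply congrArg B.p
    exact Fin.ext (by simp [Fin.last]; omega)
  have csize : P ≤ G.dist (q 0) (q (Fin.last n')) := by
    rw [hq0, hqlast]; exact hd
  exact ⟨⟨B.k, L', n', q, B.m, B.u⟩,
    ⟨⟨hk, fun i j hi hj hij => (hdisj i j hi hj hij).mono (hsub i) (hsub j), c3, c4,
      fun i j hj hij x hx y hy => hnoedge i j hj hij x (hsub i hx) y (hsub j hy),
      c6, hqmem, c8, c9, huinj, huadj,
      fun i j hj hm => hudisj i j hj (hsub j hm),
      c13,
      fun i b hb => hUL i b (hsub B.k hb),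
      fun x hx hex i hi => hlast x (hsub _ hx)
        ⟨hex.choose, hsub B.k hex.choose_spec.1, hex.choose_spec.2⟩ i hi⟩,
      cu1, cu2, cu3⟩,
    ⟨rfl, rfl, fun i _ => hsub i, fun i => Or.inr ⟨i, rfl⟩⟩,
    csize⟩

lemma rev_wbend {V : Type*} (G : SimpleGraph V) (B : WBendData V) (hB : IsWBend G B) :
    IsWBend G ⟨B.k, B.L, B.n, fun i => B.p i.rev, B.m, B.u⟩ := by
  obtain ⟨hk, hdisj, hz, hlev, hnoedge, hpinj, hpmem, hpsurj, hpadj, huinj, huadj,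
    hudisj, hbend, hUL, hlast⟩ := hB
  refine ⟨hk, hdisj, hz, hlev, hnoedge, hpinj.comp Fin.rev_injective,
    fun i => hpmem _, fun v hv => ?_, fun i j => ?_, huinj, huadj, hudisj, hbend, hUL, hlast⟩
  · obtain ⟨i, hi⟩ := hpsurj v hv
    exact ⟨i.rev, by simp [hi]⟩
  · show G.Adj (B.p i.rev) (B.p j.rev) ↔ _
    rw [hpadj]
    have h1 : (i.rev : ℕ) = B.n - i.val := by simp [Fin.val_rev]
    have h2 : (j.rev : ℕ) = B.n - j.val := by simp [Fin.val_rev]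
    rw [h1, h2]
    have hi : (i : ℕ) < B.n + 1 := i.isLt
    have hj : (j : ℕ) < B.n + 1 := j.isLt
    omega

/-- a w-bend of size at least `2p + 4` in a triangle-free graph
contains a u-bend of size at least `p`. -/
theorem stmt_12 {V : Type*} (G : SimpleGraph V) (hTF : G.CliqueFree 3)
    (B : WBendData V) (hB : IsWBend G B) (p : ℕ)
    (hsize : 2 * p + 4 ≤ WBendData.size G B) :
    ∃ B' : WBendData V, IsUBend G B' ∧ ContainedIn B' B ∧
      p ≤ WBendData.size G B' := by
  classical
  have hB' := hB
  obtain ⟨hk, hdisj, hz, hlev, hnoedge, hpinj, hpmem, hpsurj, hpadj, huinj, huadj,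
    hudisj, hbend, hUL, hlast⟩ := hB'
  set I : Finset (Fin (B.n + 1)) :=
    Finset.univ.filter (fun i => ∃ x ∈ B.L (B.k - 1), G.Adj x B.wend ∧ G.Adj x (B.p i))
    with hI
  have hIne : I.Nonempty := by
    obtain ⟨x, hxL, hxw, b, hbL, hxb⟩ := hbend
    obtain ⟨i, rfl⟩ := hpsurj b hbL
    exact ⟨i, by simp [hI]; exact ⟨x, hxL, hxw, hxb⟩⟩
  set T := I.max' hIne with hT
  set s0 := I.min' hIne with hs0
  obtain ⟨aT, haTL, haTw, haTp⟩ : ∃ x ∈ B.L (B.k - 1), G.Adj x B.wend ∧ G.Adj x (B.p T) := by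
    have := I.max'_mem hIne
    simp [hI] at this
    exact this
  obtain ⟨aS, haSL, haSw, haSp⟩ : ∃ x ∈ B.L (B.k - 1), G.Adj x B.wend ∧ G.Adj x (B.p s0) := by
    have := I.min'_mem hIne
    simp [hI] at this
    exact this
  have hmemI : ∀ x ∈ B.L (B.k - 1), G.Adj x B.wend → ∀ i, G.Adj x (B.p i) → i ∈ I := by
    intro x hx hxw i hxi
    simp [hI]
    exact ⟨x, hx, hxw, hxi⟩
  have hmaxT : ∀ x ∈ B.L (B.k - 1), G.Adj x B.wend → ∀ i, G.Adj x (B.p i) → i.val ≤ T.val :=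
    fun x hx hxw i hxi => I.le_max' i (hmemI x hx hxw i hxi)
  have hminS : ∀ x ∈ B.L (B.k - 1), G.Adj x B.wend → ∀ i, G.Adj x (B.p i) → s0.val ≤ i.val :=
    fun x hx hxw i hxi => I.min'_le i (hmemI x hx hxw i hxi)
  -- walk of length 4 from p s0 to p T
  have w4 : ∃ w : G.Walk (B.p s0) (B.p T), w.length = 4 :=
    ⟨Walk.cons haSp.symm (Walk.cons haSw (Walk.cons haTw.symm (Walk.cons haTp Walk.nil))),
      by simp⟩
  -- walks along the path
  have hwA : ∃ w : G.Walk (B.p 0) (B.p s0), w.length = s0.val := by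
    obtain ⟨w, hw⟩ := walk_along hpadj s0.val 0 (by have := s0.isLt; simp; omega)
    refine ⟨w.copy (congrArg B.p (Fin.ext (by simp))) (congrArg B.p (Fin.ext (by simp))), by
      rw [Walk.length_copy]; exact hw⟩
  have hwC : ∃ w : G.Walk (B.p T) (B.p (Fin.last B.n)), w.length = B.n - T.val := by
    obtain ⟨w, hw⟩ := walk_along hpadj (B.n - T.val) T (by have := T.isLt; omega)
    refine ⟨w.copy rfl (congrArg B.p (Fin.ext (by simp [Fin.last]; omega))), by simp [hw]⟩
  obtain ⟨wA0, hwA0⟩ := hwA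
  obtain ⟨wC0, hwC0⟩ := hwC
  obtain ⟨wAm, hwAm⟩ := (wA0.reachable).exists_walk_length_eq_dist
  obtain ⟨wCm, hwCm⟩ := (wC0.reachable).exists_walk_length_eq_dist
  obtain ⟨w4w, hw4⟩ := w4
  have hchain : G.dist (B.p 0) (B.p (Fin.last B.n)) ≤
      G.dist (B.p 0) (B.p s0) + 4 + G.dist (B.p T) (B.p (Fin.last B.n)) := by
    have := SimpleGraph.dist_le ((wAm.append w4w).append wCm)
    simpa [hwAm, hw4, hwCm, Nat.add_assoc] using this
  rw [WBendData.size] at hsize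
  by_cases hc : p ≤ G.dist (B.p T) (B.p (Fin.last B.n))
  · exact one_sided G B hB p T aT haTL haTw haTp hmaxT hc
  · have hA : p ≤ G.dist (B.p 0) (B.p s0) := by omega
    -- apply to the reversed bend
    set Brev : WBendData V := ⟨B.k, B.L, B.n, fun i => B.p i.rev, B.m, B.u⟩ with hBrev
    have hBr : IsWBend G Brev := rev_wbend G B hB
    have hrr : ∀ i : Fin (B.n + 1), Brev.p i = B.p i.rev := fun i => rfl
    have hr1 : Brev.p s0.rev = B.p s0 := by rw [hrr, Fin.rev_rev]
    have hr2 : Brev.p (Fin.last B.n) = B.p 0 := by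
      rw [hrr]
      exact congrArg B.p (Fin.ext (by simp [Fin.val_rev]))
    have hmaxr : ∀ x ∈ Brev.L (Brev.k - 1), G.Adj x Brev.wend →
        ∀ i, G.Adj x (Brev.p i) → i.val ≤ (s0.rev).val := by
      intro x hx hxw i hxi
      have := hminS x hx hxw i.rev (by rw [← hrr]; exact hxi)
      have h1 : (i.rev : ℕ) = B.n - i.val := by simp [Fin.val_rev]; rfl
      have h2 : ((s0.rev : Fin (B.n+1)) : ℕ) = B.n - s0.val := by simp [Fin.val_rev]
      have hi : (i : ℕ) < B.n + 1 := i.isLt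
      have hs : (s0 : ℕ) < B.n + 1 := s0.isLt
      omega
    have hdr : p ≤ G.dist (Brev.p s0.rev) (Brev.p (Fin.last Brev.n)) := by
      rw [hr1]
      rw [show (Fin.last Brev.n) = Fin.last B.n from rfl, hr2]
      rw [SimpleGraph.dist_comm]
      exact hA
    obtain ⟨B', hub, hcont, hsz⟩ := one_sided G Brev hBr p s0.rev aS haSL haSw
      (by rw [hr1]; exact haSp) hmaxr hdr
    exact ⟨B', hub, hcont, hsz⟩
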